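/- arXiv:1708.02321 — 3 statements merged into one kernel-verified Lean document; each statement's English description precedes it below -/
import Mathlib

section
/- For fixed x ∈ ℂ^{n_t}, y ∈ ℂ^{n_r}, H ∈ ℂ^{n_r × n_t}, and a probability distribution on phase vectors θ ∈ ℝ^{n_t+n_r} whose support has positive probability on every open set, define f(γ) := ln E_Θ[exp(-γ‖y - H_Θ x‖²)], where H_θ := diag(e^{iθ_{r,1}},...,e^{iθ_{r,n_r}}) H diag(e^{iθ_{t,1}},...,e^{iθ_{t,n_t}}). Then lim_{γ→∞} (-1/γ) f(γ) = m(x,y,H) := inf_{θ ∈ ℝ^{n_t+n_r}} ‖y - H_θ x‖². -/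
open MeasureTheory Filter
set_option maxHeartbeats 1000000

/-- Squared Euclidean distance `‖y - H_θ x‖²` where the channel matrix `H` has its
rows multiplied by `e^{iθ_{r,k}}` and its columns by `e^{iθ_{t,l}}`. -/
noncomputable def perturbedNormSq {nt nr : ℕ} (H : Matrix (Fin nr) (Fin nt) ℂ)
    (x : Fin nt → ℂ) (y : Fin nr → ℂ) (θ : (Fin nt → ℝ) × (Fin nr → ℝ)) : ℝ :=
  ∑ k, ‖(y k -
    Complex.exp (Complex.I * (θ.2 k)) *
      ∑ l, H k l * Complex.exp (Complex.I * (θ.1 l)) * x l)‖ ^ 2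

theorem highSNR_loglikelihood_limit {nt nr : ℕ}
    (H : Matrix (Fin nr) (Fin nt) ℂ) (x : Fin nt → ℂ) (y : Fin nr → ℂ)
    (μ : Measure ((Fin nt → ℝ) × (Fin nr → ℝ))) [IsProbabilityMeasure μ]
    (hpos : ∀ U : Set ((Fin nt → ℝ) × (Fin nr → ℝ)), IsOpen U → U.Nonempty → 0 < μ U) :
    Tendsto (fun γ : ℝ =>
        -(1 / γ) * Real.log (∫ θ, Real.exp (-γ * perturbedNormSq H x y θ) ∂μ))
      atTop (nhds (⨅ θ, perturbedNormSq H x y θ)) := by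
  set f := perturbedNormSq H x y with hfdef
  have hf_cont : Continuous f := by
    rw [hfdef]; unfold perturbedNormSq
    apply continuous_finset_sum
    intro k _
    apply Continuous.pow
    apply continuous_norm.comp
    apply Continuous.sub continuous_const
    apply Continuous.mul
    · exact Complex.continuous_exp.comp (continuous_const.mul
        (Complex.continuous_ofReal.comp ((continuous_apply k).comp continuous_snd)))
    · apply continuous_finset_sum
      intro l _
      apply Continuous.mul
      apply Continuous.mul continuous_const
      exact Complex.continuous_exp.comp (continuous_const.mul
        (Complex.continuous_ofReal.comp ((continuous_apply l).comp continuous_fst)))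
      exact continuous_const
  have hf_nonneg : ∀ θ, 0 ≤ f θ := by
    intro θ
    rw [hfdef]; unfold perturbedNormSq
    exact Finset.sum_nonneg fun k _ => sq_nonneg _
  have hbdd : BddBelow (Set.range f) := ⟨0, by rintro v ⟨θ, rfl⟩; exact hf_nonneg θ⟩
  set m := ⨅ θ, f θ with hm
  have hm_le : ∀ θ, m ≤ f θ := fun θ => ciInf_le hbdd θ
  -- integrability
  have hint : ∀ γ : ℝ, 0 ≤ γ → Integrable (fun θ => Real.exp (-γ * f θ)) μ := by
    intro γ hγ
    have hc : Continuous fun θ => Real.exp (-γ * f θ) := by fun_prop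
    refine Integrable.mono' (integrable_const 1) hc.aestronglyMeasurable ?_
    · filter_upwards with θ
      rw [Real.norm_eq_abs, abs_of_pos (Real.exp_pos _)]
      apply Real.exp_le_one_iff.mpr
      have := mul_nonneg hγ (hf_nonneg θ)
      nlinarith
  -- upper bound on the integral
  have hub : ∀ γ : ℝ, 0 ≤ γ →
      (∫ θ, Real.exp (-γ * f θ) ∂μ) ≤ Real.exp (-γ * m) := by
    intro γ hγ
    calc (∫ θ, Real.exp (-γ * f θ) ∂μ) ≤ ∫ _, Real.exp (-γ * m) ∂μ := by
          apply integral_mono (hint γ hγ) (integrable_const _)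
          intro θ
          apply Real.exp_le_exp.mpr
          have := mul_le_mul_of_nonneg_left (hm_le θ) hγ
          nlinarith
      _ = Real.exp (-γ * m) := by simp
  -- lower bound on the integral, for each ε > 0
  have hlb : ∀ ε : ℝ, 0 < ε → ∃ c : ℝ, 0 < c ∧ ∀ γ : ℝ, 0 ≤ γ →
      c * Real.exp (-γ * (m + ε)) ≤ ∫ θ, Real.exp (-γ * f θ) ∂μ := by
    intro ε hε
    obtain ⟨θ₀, hθ₀⟩ : ∃ θ₀, f θ₀ < m + ε := exists_lt_of_ciInf_lt (by linarith)
    set U : Set ((Fin nt → ℝ) × (Fin nr → ℝ)) := f ⁻¹' (Set.Iio (m + ε)) with hU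
    have hUopen : IsOpen U := isOpen_Iio.preimage hf_cont
    have hUne : U.Nonempty := ⟨θ₀, hθ₀⟩
    refine ⟨(μ U).toReal, ENNReal.toReal_pos (hpos U hUopen hUne).ne' (measure_ne_top μ U), ?_⟩
    intro γ hγ
    calc (μ U).toReal * Real.exp (-γ * (m + ε))
        = ∫ _ in U, Real.exp (-γ * (m + ε)) ∂μ := by rw [setIntegral_const, smul_eq_mul, measureReal_def]
      _ ≤ ∫ θ in U, Real.exp (-γ * f θ) ∂μ := by
          apply setIntegral_mono_on (integrableOn_const (measure_ne_top μ U))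
            ((hint γ hγ).integrableOn) hUopen.measurableSet
          intro θ hθ
          apply Real.exp_le_exp.mpr
          have : f θ ≤ m + ε := le_of_lt hθ
          nlinarith [mul_le_mul_of_nonneg_left this hγ]
      _ ≤ ∫ θ, Real.exp (-γ * f θ) ∂μ :=
          setIntegral_le_integral (hint γ hγ) (by filter_upwards with θ; positivity)
  -- positivity of the integral
  obtain ⟨c₁, hc₁, hlb₁⟩ := hlb 1 one_pos
  have hIpos : ∀ γ : ℝ, 0 ≤ γ → 0 < ∫ θ, Real.exp (-γ * f θ) ∂μ := by
    intro γ hγ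
    have := hlb₁ γ hγ
    have : 0 < c₁ * Real.exp (-γ * (m + 1)) := by positivity
    linarith [hlb₁ γ hγ]
  rw [tendsto_order]
  constructor
  · -- eventual lower bound
    intro a ha
    filter_upwards [eventually_gt_atTop 0] with γ hγ
    have h1 : Real.log (∫ θ, Real.exp (-γ * f θ) ∂μ) ≤ -γ * m := by
      have := Real.log_le_log (hIpos γ hγ.le) (hub γ hγ.le)
      rwa [Real.log_exp] at this
    have h2 : -(1/γ) ≤ 0 := neg_nonpos.mpr (by positivity)
    have h3 := mul_le_mul_of_nonpos_left h1 h2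
    have h4 : -(1/γ) * (-γ * m) = m := by field_simp
    calc a < m := ha
      _ = -(1/γ) * (-γ * m) := h4.symm
      _ ≤ -(1/γ) * Real.log (∫ θ, Real.exp (-γ * f θ) ∂μ) := h3
  · -- eventual upper bound
    intro a ha
    set ε := (a - m) / 2 with hεdef
    have hε : 0 < ε := by rw [hεdef]; linarith
    obtain ⟨c, hc, hlbc⟩ := hlb ε hε
    have htend : Tendsto (fun γ : ℝ => -Real.log c / γ) atTop (nhds 0) :=
      Tendsto.div_atTop tendsto_const_nhds tendsto_id
    filter_upwards [eventually_gt_atTop 0, htend.eventually (eventually_lt_nhds hε)]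
      with γ hγ hsmall
    have h1 : Real.log c + (-γ * (m + ε)) ≤ Real.log (∫ θ, Real.exp (-γ * f θ) ∂μ) := by
      have := Real.log_le_log (by positivity) (hlbc γ hγ.le)
      rwa [Real.log_mul hc.ne' (Real.exp_pos _).ne', Real.log_exp] at this
    have h2 : -(1/γ) ≤ 0 := neg_nonpos.mpr (by positivity)
    have h3 := mul_le_mul_of_nonpos_left h1 h2
    have h4 : -(1/γ) * (Real.log c + (-γ * (m + ε))) = (m + ε) + (-Real.log c / γ) := by
      field_simp; ring
    calc -(1/γ) * Real.log (∫ θ, Real.exp (-γ * f θ) ∂μ)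
        ≤ (m + ε) + (-Real.log c / γ) := by rw [← h4]; exact h3
      _ < (m + ε) + ε := by linarith
      _ = a := by rw [hεdef]; ring
end

section
/- Let Θ_r, Θ_r', Θ_t, Θ_t' be independent real Gaussians with Θ_r, Θ_r' ∼ N(0, σ_r²) and Θ_t, Θ_t' ∼ N(0, σ_t²). Then E[(1 - cos(Θ_t + Θ_r))(1 - cos(Θ_t' + Θ_r))] = 1 - 2e^{-(σ_r² + σ_t²)/2} + e^{-σ_r² - σ_t²} cosh(σ_r²). -/
open MeasureTheory ProbabilityTheory

noncomputable section

lemma gauss_cexp (v : NNReal) (t : ℝ) :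
    ∫ x, Complex.exp (Complex.I * t * x) ∂(gaussianReal 0 v)
      = (Real.exp (-(t ^ 2 * v) / 2) : ℝ) := by
  by_cases hv : v = 0
  · simp [hv, gaussianReal_zero_var]
  · have hvpos : (0 : ℝ) < (v : ℝ) := by
      exact_mod_cast pos_iff_ne_zero.mpr hv
    rw [gaussianReal_of_var_ne_zero _ hv]
    have hpdf : gaussianPDF 0 v = fun x => ((Real.toNNReal (gaussianPDFReal 0 v x)) : ENNReal) := rfl
    rw [hpdf, integral_withDensity_eq_integral_smul
        ((measurable_gaussianPDFReal 0 v).real_toNNReal) _]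
    have h1 : ∀ x : ℝ, (Real.toNNReal (gaussianPDFReal 0 v x)) • Complex.exp (Complex.I * t * x)
        = (((Real.sqrt (2 * Real.pi * v))⁻¹ : ℝ) : ℂ) *
          (Complex.exp (Complex.I * t * x) * Complex.exp (-(1/(2 * (v:ℝ)) : ℂ) * (x:ℂ) ^ 2)) := by
      intro x
      rw [NNReal.smul_def, Real.coe_toNNReal _ (gaussianPDFReal_nonneg 0 v x)]
      rw [gaussianPDFReal, Complex.real_smul]
      push_cast
      have hvne : ((v:ℝ):ℂ) ≠ 0 := by exact_mod_cast hvpos.ne'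
      have harg : (-((x:ℂ) - 0) ^ 2 / (2 * (v:ℝ))) = -(1/(2 * (v:ℝ) : ℂ)) * (x:ℂ)^2 := by
        field_simp
        ring
      rw [harg]
      ring
    simp only [h1]
    rw [integral_const_mul]
    have hb : (0:ℝ) < (1/(2 * (v:ℝ)) : ℂ).re := by
      simp
      positivity
    rw [fourierIntegral_gaussian hb (t : ℂ)]
    have hpi : ((Real.pi : ℂ)) / (1/(2 * (v:ℝ)) : ℂ) = ((2 * Real.pi * v : ℝ) : ℂ) := by
      push_cast
      field_simp
    rw [hpi]
    have hcpow : ((2 * Real.pi * v : ℝ) : ℂ) ^ (1/2 : ℂ)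
        = ((Real.sqrt (2 * Real.pi * v) : ℝ) : ℂ) := by
      rw [show (1/2 : ℂ) = ((1/2 : ℝ) : ℂ) by norm_num,
        ← Complex.ofReal_cpow (by positivity), Real.sqrt_eq_rpow]
    rw [hcpow]
    have hexp : (-(t:ℂ) ^ 2 / (4 * (1/(2 * (v:ℝ)) : ℂ))) = ((-(t ^ 2 * v) / 2 : ℝ) : ℂ) := by
      have : ((v:ℂ)) ≠ 0 := by exact_mod_cast hvpos.ne'
      push_cast
      field_simp
      ring
    rw [hexp, ← Complex.ofReal_exp]
    have hs : ((Real.sqrt (2 * Real.pi * v) : ℝ)) ≠ 0 := by positivity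
    rw [← Complex.ofReal_mul, ← Complex.ofReal_mul]
    norm_cast
    field_simp


lemma gauss_cos (v : NNReal) (t a : ℝ) :
    ∫ x, Real.cos (t * x + a) ∂(gaussianReal 0 v)
      = Real.exp (-(t ^ 2 * v) / 2) * Real.cos a := by
  have hm : Measurable fun x : ℝ => Complex.exp (Complex.I * t * x) := by
    measurability
  have hi : Integrable (fun x : ℝ => Complex.exp (Complex.I * t * x)) (gaussianReal 0 v) := by
    refine (integrable_const (1:ℝ)).mono' hm.aestronglyMeasurable ?_
    refine Filter.Eventually.of_forall fun x => ?_
    rw [Complex.norm_exp]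
    simp
  have key : ∀ x : ℝ, Real.cos (t*x + a)
      = (Complex.exp (Complex.I * a) * Complex.exp (Complex.I * t * x)).re := by
    intro x
    rw [← Complex.exp_add]
    have h2 : Complex.I * a + Complex.I * t * x = ((t*x+a : ℝ) : ℂ) * Complex.I := by
      push_cast; ring
    rw [h2, Complex.exp_ofReal_mul_I_re]
  simp only [key]
  have := integral_re (μ := gaussianReal 0 v)
    (f := fun x : ℝ => Complex.exp (Complex.I * a) * Complex.exp (Complex.I * t * x))
    (hi.const_mul _)
  simp only [RCLike.re_to_complex] at this
  rw [this, integral_const_mul, gauss_cexp]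
  have h3 : Complex.I * a = ((a : ℝ) : ℂ) * Complex.I := by ring
  rw [h3, Complex.mul_re]
  simp only [Complex.ofReal_re, Complex.ofReal_im, Complex.exp_ofReal_mul_I_re, mul_zero, sub_zero]
  ring

lemma integrable_cos_gauss (v : NNReal) (t a : ℝ) :
    Integrable (fun x : ℝ => Real.cos (t * x + a)) (gaussianReal 0 v) := by
  refine (integrable_const (1:ℝ)).mono' ?_ ?_
  · exact (Real.continuous_cos.comp (by continuity)).aestronglyMeasurable
  · exact Filter.Eventually.of_forall fun x => by
      simpa using Real.abs_cos_le_one (t * x + a)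

lemma gauss_one_sub_cos (v : NNReal) (a : ℝ) :
    ∫ x, (1 - Real.cos (x + a)) ∂(gaussianReal 0 v)
      = 1 - Real.exp (-(v:ℝ)/2) * Real.cos a := by
  have h1 : (fun x : ℝ => 1 - Real.cos (x + a)) = fun x => 1 - Real.cos (1 * x + a) := by
    funext x; rw [one_mul]
  rw [h1]
  rw [integral_sub (integrable_const 1) (integrable_cos_gauss v 1 a), gauss_cos]
  simp

theorem gaussian_expectation_one_sub_cos_prod (vr vt : NNReal) :
    ∫ θr, ∫ θt, ∫ θt',
        (1 - Real.cos (θt + θr)) * (1 - Real.cos (θt' + θr))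
        ∂(gaussianReal 0 vt) ∂(gaussianReal 0 vt) ∂(gaussianReal 0 vr)
      = 1 - 2 * Real.exp (-((vr : ℝ) + (vt : ℝ)) / 2) +
          Real.exp (-(vr : ℝ) - (vt : ℝ)) * Real.cosh (vr : ℝ) := by
  set E : ℝ := Real.exp (-(vt:ℝ)/2) with hE
  have step1 : ∀ θr : ℝ, (∫ θt, ∫ θt',
        (1 - Real.cos (θt + θr)) * (1 - Real.cos (θt' + θr))
        ∂(gaussianReal 0 vt) ∂(gaussianReal 0 vt))
      = (1 - E * Real.cos θr) * (1 - E * Real.cos θr) := by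
    intro θr
    have inner : ∀ θt : ℝ, (∫ θt', (1 - Real.cos (θt + θr)) * (1 - Real.cos (θt' + θr))
        ∂(gaussianReal 0 vt)) = (1 - Real.cos (θt + θr)) * (1 - E * Real.cos θr) := by
      intro θt
      rw [MeasureTheory.integral_const_mul, gauss_one_sub_cos]
    simp only [inner]
    rw [MeasureTheory.integral_mul_const, gauss_one_sub_cos]
  rw [integral_congr_ae (Filter.Eventually.of_forall step1)]
  have expand : ∀ θ : ℝ, (1 - E * Real.cos θ) * (1 - E * Real.cos θ)
      = (1 + E^2/2) - 2*E*Real.cos (1*θ + 0) + (E^2/2) * Real.cos (2*θ + 0) := by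
    intro θ
    have h := Real.cos_sq θ
    simp only [one_mul, add_zero]
    linear_combination E^2 * h
  rw [integral_congr_ae (Filter.Eventually.of_forall expand)]
  have i1 := integrable_cos_gauss vr 1 0
  have i2 := integrable_cos_gauss vr 2 0
  rw [integral_add (by exact (integrable_const _).sub (i1.const_mul _)) (i2.const_mul _),
    integral_sub (integrable_const _) (i1.const_mul _),
    MeasureTheory.integral_const_mul, MeasureTheory.integral_const_mul,
    gauss_cos, gauss_cos]
  simp only [integral_const, measure_univ, probReal_univ, ENNReal.toReal_one, smul_eq_mul, one_mul,
    Real.cos_zero, mul_one]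
  have hA : Real.exp (-((1:ℝ)^2 * vr) / 2) = Real.exp (-(vr:ℝ)/2) := by congr 1; ring
  have hB : Real.exp (-((2:ℝ)^2 * vr) / 2) = Real.exp (-(2*(vr:ℝ))) := by congr 1; ring
  rw [hA, hB, Real.cosh_eq, hE]
  have h1 : Real.exp (-((vr:ℝ)+(vt:ℝ))/2) = Real.exp (-(vt:ℝ)/2) * Real.exp (-(vr:ℝ)/2) := by
    rw [← Real.exp_add]; congr 1; ring
  have h2 : Real.exp (-(vr:ℝ)-(vt:ℝ)) * Real.exp (vr:ℝ) = Real.exp (-(vt:ℝ)/2)^2 := by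
    rw [sq, ← Real.exp_add, ← Real.exp_add]; congr 1; ring
  have h3 : Real.exp (-(vr:ℝ)-(vt:ℝ)) * Real.exp (-(vr:ℝ))
      = Real.exp (-(vt:ℝ)/2)^2 * Real.exp (-(2*(vr:ℝ))) := by
    rw [sq, ← Real.exp_add, ← Real.exp_add, ← Real.exp_add]; congr 1; ring
  linear_combination 2*h1 - h2/2 - h3/2

end
end

section
/- Define sinhc(x) := sinh(x)/x extended by sinhc(0) = 1, and let M(ξ) := e^{ξ} · sinhc(√(Sξ))^{-1/2} for S > 0 (interpreted via the entire function sinhc(√z) = Σ_{k≥0} z^k/(2k+1)!). Then M'(0) = 1 - S/12 and M''(0) - (M'(0))² = S²/180. -/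
/-- The entire function `z ↦ sinhc (√z) = ∑ zᵏ/(2k+1)!` (restricted to the reals). -/
noncomputable def sinhcSqrt (z : ℝ) : ℝ := ∑' k : ℕ, z ^ k / (2 * k + 1).factorial

/-- The (approximate) moment generating function `M(ξ) = e^ξ sinhc(√(Sξ))^{-1/2}` of the
amplitude of the filtered Wiener phase-noise channel gain. -/
noncomputable def amplitudeMGF (S : ℝ) (ξ : ℝ) : ℝ :=
  Real.exp ξ * (sinhcSqrt (S * ξ)) ^ (-(1 / 2) : ℝ)

open FormalMultilinearSeries Filter

noncomputable def pc : ℕ → ℝ := fun n => ((2 * n + 1).factorial : ℝ)⁻¹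
noncomputable def qc : ℕ → ℝ := fun n => ((n : ℝ) + 1) * pc (n + 1)

noncomputable def F1 : ℝ → ℝ := ofScalarsSum qc

lemma pc_pos (n : ℕ) : 0 < pc n := by
  simp only [pc]; positivity

lemma qc_pos (n : ℕ) : 0 < qc n := by
  have := pc_pos (n + 1); simp only [qc]; positivity

lemma pc_ratio (n : ℕ) : ((n : ℝ) + 1) * pc (n + 1) ≤ pc n := by
  have hk : (n + 1) * (2 * n + 1).factorial ≤ (2 * (n + 1) + 1).factorial := by
    rw [show 2 * (n + 1) + 1 = (2 * n + 2) + 1 by ring, Nat.factorial_succ, Nat.factorial_succ]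
    calc (n + 1) * (2 * n + 1).factorial
        ≤ ((2 * n + 2 + 1) * (2 * n + 1 + 1)) * (2 * n + 1).factorial := by
          apply Nat.mul_le_mul_right; nlinarith
      _ = (2 * n + 2 + 1) * ((2 * n + 1 + 1) * (2 * n + 1).factorial) := by ring
  simp only [pc]
  have h1 : (0:ℝ) < ((2 * n + 1).factorial : ℝ) := by positivity
  have h2 : (0:ℝ) < ((2 * (n + 1) + 1).factorial : ℝ) := by positivity
  rw [inv_eq_one_div, inv_eq_one_div, mul_one_div, div_le_div_iff₀ h2 h1, one_mul]
  exact_mod_cast hk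

lemma qc_ratio (n : ℕ) : ((n : ℝ) + 1) * qc (n + 1) ≤ qc n := by
  simp only [qc]
  have h := pc_ratio (n + 1)
  push_cast at h ⊢
  nlinarith [pc_pos (n + 2), (n.cast_nonneg : (0:ℝ) ≤ n)]

lemma radius_top_aux (c : ℕ → ℝ) (hpos : ∀ n, 0 < c n)
    (hr : ∀ n : ℕ, ((n : ℝ) + 1) * c (n + 1) ≤ c n) : (ofScalars ℝ c).radius = ⊤ := by
  apply ofScalars_radius_eq_top_of_tendsto
  · exact Eventually.of_forall fun n => (hpos n).ne'
  · apply squeeze_zero (fun n => by positivity) (fun n => ?_)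
      tendsto_one_div_add_atTop_nhds_zero_nat
    simp only [Nat.succ_eq_add_one, Real.norm_eq_abs, abs_of_pos (hpos _)]
    rw [div_le_div_iff₀ (hpos n) (by positivity), one_mul]
    nlinarith [hr n, (hpos (n + 1)).le]

lemma pc_radius : (ofScalars ℝ pc).radius = ⊤ := radius_top_aux _ pc_pos pc_ratio
lemma qc_radius : (ofScalars ℝ qc).radius = ⊤ := radius_top_aux _ qc_pos qc_ratio

lemma sinhcSqrt_eq : sinhcSqrt = ofScalarsSum pc := by
  funext z
  rw [show ofScalarsSum pc = fun x : ℝ => ∑' n, pc n • x ^ n from ofScalarsSum_eq_tsum _]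
  simp only [sinhcSqrt, pc, smul_eq_mul]
  congr 1; funext k; rw [div_eq_mul_inv, mul_comm]

lemma hp : HasFPowerSeriesOnBall sinhcSqrt (ofScalars ℝ pc) 0 ⊤ := by
  have h := (ofScalars ℝ pc).hasFPowerSeriesOnBall (by rw [pc_radius]; exact ENNReal.zero_lt_top)
  rw [pc_radius] at h
  exact sinhcSqrt_eq ▸ h

lemma hq : HasFPowerSeriesOnBall F1 (ofScalars ℝ qc) 0 ⊤ := by
  have h := (ofScalars ℝ qc).hasFPowerSeriesOnBall (by rw [qc_radius]; exact ENNReal.zero_lt_top)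
  rw [qc_radius] at h
  exact h

lemma mem_top (z : ℝ) : z ∈ Metric.eball (0:ℝ) ⊤ := by simp

lemma hasDerivAt_sinhcSqrt (z : ℝ) : HasDerivAt sinhcSqrt (F1 z) z := by
  have hdiff : DifferentiableAt ℝ sinhcSqrt z :=
    (hp.analyticAt_of_mem (mem_top z)).differentiableAt
  rcases eq_or_ne z 0 with rfl | hz
  · have h0 := hp.hasFPowerSeriesAt.hasDerivAt
    have : (ofScalars ℝ pc) 1 (fun _ => (1:ℝ)) = F1 0 := by
      rw [ofScalars_apply_eq, show F1 0 = qc 0 • 1 from ofScalarsSum_zero _]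
      simp [qc]
    rwa [this] at h0
  · have hsum := (hp.fderiv.hasSum (mem_top z)).mapL (ContinuousLinearMap.apply ℝ ℝ z)
    have hsum2 := (hq.hasSum (mem_top z)).mul_right z
    have hterm : (fun n => (ContinuousLinearMap.apply ℝ ℝ z)
        ((ofScalars ℝ pc).derivSeries n fun _ => z))
        = fun n => ((ofScalars ℝ qc) n fun _ => z) * z := by
      funext n
      rw [ContinuousLinearMap.apply_apply, derivSeries_apply_diag, ofScalars_apply_eq,
        ofScalars_apply_eq]
      simp only [qc, smul_eq_mul, nsmul_eq_mul, Nat.add_comm 1]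
      push_cast
      ring
    rw [hterm] at hsum
    have hkey := hsum.unique hsum2
    simp only [zero_add, ContinuousLinearMap.apply_apply] at hkey
    have h3 : (fderiv ℝ sinhcSqrt z) z = z * deriv sinhcSqrt z := by
      have := (fderiv ℝ sinhcSqrt z).map_smul z (1:ℝ)
      simpa [fderiv_apply_one_eq_deriv] using this.symm
    rw [h3] at hkey
    have h4 : deriv sinhcSqrt z = F1 z :=
      mul_right_cancel₀ hz (by rw [← hkey]; ring)
    exact h4 ▸ hdiff.hasDerivAt

lemma sinhcSqrt_zero : sinhcSqrt 0 = 1 := by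
  have h : ofScalarsSum pc (0:ℝ) = pc 0 • (1:ℝ) := ofScalarsSum_zero _
  rw [sinhcSqrt_eq, h]
  norm_num [pc, Nat.factorial]

lemma F1_zero : F1 0 = 1 / 6 := by
  have h : ofScalarsSum qc (0:ℝ) = qc 0 • (1:ℝ) := ofScalarsSum_zero _
  rw [show F1 0 = ofScalarsSum qc (0:ℝ) from rfl, h]
  norm_num [qc, pc, Nat.factorial]

lemma hasDerivAt_F1 : HasDerivAt F1 (1 / 60) 0 := by
  have h := hq.hasFPowerSeriesAt.hasDerivAt
  have : (ofScalars ℝ qc) 1 (fun _ => (1:ℝ)) = 1 / 60 := by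
    rw [ofScalars_apply_eq]
    norm_num [qc, pc, Nat.factorial]
  rwa [this] at h

/-- Explicit formula for `M'`. -/
noncomputable def M1 (S ξ : ℝ) : ℝ :=
  Real.exp ξ * ((sinhcSqrt (S * ξ)) ^ (-(1 / 2) : ℝ)
    + (-(1 / 2) : ℝ) * (sinhcSqrt (S * ξ)) ^ ((-(1 / 2) : ℝ) - 1) * (S * F1 (S * ξ)))

lemma hasDerivAt_inner (S ξ : ℝ) :
    HasDerivAt (fun x => sinhcSqrt (S * x)) (S * F1 (S * ξ)) ξ := by
  have h := (hasDerivAt_sinhcSqrt (S * ξ)).comp ξ ((hasDerivAt_id ξ).const_mul S)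
  simpa [Function.comp_def, mul_comm] using h

lemma hasDerivAt_M (S : ℝ) (ξ : ℝ) (hξ : 0 < sinhcSqrt (S * ξ)) :
    HasDerivAt (amplitudeMGF S) (M1 S ξ) ξ := by
  have hg := hasDerivAt_inner S ξ
  have hr : HasDerivAt (fun x : ℝ => x ^ (-(1 / 2) : ℝ))
      ((-(1 / 2) : ℝ) * (sinhcSqrt (S * ξ)) ^ ((-(1 / 2) : ℝ) - 1)) (sinhcSqrt (S * ξ)) :=
    Real.hasDerivAt_rpow_const (Or.inl hξ.ne')
  have hcomp := hr.comp ξ hg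
  have hM := (Real.hasDerivAt_exp ξ).mul hcomp
  have hfun : (fun x => Real.exp x *
      ((fun y : ℝ => y ^ (-(1 / 2) : ℝ)) ∘ fun x => sinhcSqrt (S * x)) x) = amplitudeMGF S := by
    funext x; simp [amplitudeMGF, Function.comp_def]
  change HasDerivAt (fun x => Real.exp x *
      ((fun y : ℝ => y ^ (-(1 / 2) : ℝ)) ∘ fun x => sinhcSqrt (S * x)) x) _ ξ at hM
  rw [hfun] at hM
  convert hM using 1
  simp only [M1, Function.comp_apply]
  ring

theorem amplitude_mgf_derivatives (S : ℝ) (hS : 0 < S) :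
    deriv (amplitudeMGF S) 0 = 1 - S / 12 ∧
    deriv (deriv (amplitudeMGF S)) 0 - (deriv (amplitudeMGF S) 0) ^ 2 = S ^ 2 / 180 := by
  have s0 : sinhcSqrt (S * 0) = 1 := by rw [mul_zero, sinhcSqrt_zero]
  have hpos0 : 0 < sinhcSqrt (S * 0) := by rw [s0]; norm_num
  -- positivity near 0
  have hcont : ContinuousAt (fun ξ => sinhcSqrt (S * ξ)) 0 :=
    (hasDerivAt_inner S 0).continuousAt
  have hpos : ∀ᶠ ξ in nhds (0:ℝ), 0 < sinhcSqrt (S * ξ) := by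
    have h2 : Tendsto (fun ξ => sinhcSqrt (S * ξ)) (nhds 0) (nhds 1) := s0 ▸ hcont
    exact h2.eventually (eventually_gt_nhds zero_lt_one)
  have first : deriv (amplitudeMGF S) 0 = 1 - S / 12 := by
    rw [(hasDerivAt_M S 0 hpos0).deriv]
    simp only [M1, mul_zero, sinhcSqrt_zero, F1_zero, Real.exp_zero, Real.one_rpow]
    ring
  refine ⟨first, ?_⟩
  have hEq : deriv (amplitudeMGF S) =ᶠ[nhds (0:ℝ)] M1 S :=
    hpos.mono fun ξ h => (hasDerivAt_M S ξ h).deriv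
  rw [hEq.deriv_eq, first]
  -- derivative of M1 at 0
  have hg0 : HasDerivAt (fun x => sinhcSqrt (S * x)) (S * F1 (S * 0)) 0 := hasDerivAt_inner S 0
  have h1 : HasDerivAt (fun x => (sinhcSqrt (S * x)) ^ (-(1 / 2) : ℝ))
      ((-(1 / 2) : ℝ) * (sinhcSqrt (S * 0)) ^ ((-(1 / 2) : ℝ) - 1) * (S * F1 (S * 0))) 0 :=
    by have := (Real.hasDerivAt_rpow_const (p := (-(1 / 2) : ℝ)) (Or.inl hpos0.ne')).comp 0 hg0; exact this
  have h2 : HasDerivAt (fun x => (sinhcSqrt (S * x)) ^ ((-(1 / 2) : ℝ) - 1))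
      (((-(1 / 2) : ℝ) - 1) * (sinhcSqrt (S * 0)) ^ ((-(1 / 2) : ℝ) - 1 - 1) * (S * F1 (S * 0)))
      0 :=
    by have := (Real.hasDerivAt_rpow_const (p := ((-(1 / 2) : ℝ) - 1)) (Or.inl hpos0.ne')).comp 0 hg0; exact this
  have h3 : HasDerivAt (fun x => F1 (S * x)) (S * (1 / 60)) 0 := by
    have h0 : HasDerivAt F1 (1 / 60) (S * 0) := by rw [mul_zero]; exact hasDerivAt_F1
    have h := h0.comp 0 ((hasDerivAt_id 0).const_mul S)
    simpa [Function.comp_def, mul_comm] using h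
  have hinner := h1.add ((h2.const_mul (-(1 / 2) : ℝ)).mul (h3.const_mul S))
  have hM1d := (Real.hasDerivAt_exp 0).mul hinner
  have hfun : (fun x => Real.exp x * ((sinhcSqrt (S * x)) ^ (-(1 / 2) : ℝ)
      + (-(1 / 2) : ℝ) * (sinhcSqrt (S * x)) ^ ((-(1 / 2) : ℝ) - 1) * (S * F1 (S * x))))
      = M1 S := by
    funext x; simp [M1]
  change HasDerivAt (fun x => Real.exp x * ((sinhcSqrt (S * x)) ^ (-(1 / 2) : ℝ)
      + (-(1 / 2) : ℝ) * (sinhcSqrt (S * x)) ^ ((-(1 / 2) : ℝ) - 1) * (S * F1 (S * x)))) _ 0 at hM1d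
  rw [hfun] at hM1d
  rw [hM1d.deriv]
  simp only [Pi.add_apply, Pi.mul_apply, mul_zero, sinhcSqrt_zero, F1_zero, Real.exp_zero, Real.one_rpow]
  ring
end
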